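/- Define c_1, c_2 : ℕ³ → ℤ[q] by the recurrences c_1(k22,k12,k11) = q^{2n} c_2(k22-1,k12,k11) + q^{2n-1} c_2(k22,k12-1,k11) + c_1(k22,k12,k11-1) and c_2(k22,k12,k11) = c_2(k22-1,k12,k11) + q^{2n-1} c_2(k22,k12-1,k11) + c_1(k22,k12,k11-1), where n = k22+k12+k11, with c_r = 0 when any argument is negative and c_r(0,0,0) = 1. Then c_2(k22,k12,k11) = q^{k12²} · qmultinomial(k22+k12+k11; k22,k12,k11) evaluated at q², where qmultinomial is the Gaussian multinomial coefficient. -/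
import Mathlib


open Polynomial

/-- Gaussian binomial coefficient in `ℤ[q]`, via the `q`-Pascal recurrence;
equals `(q)_n / ((q)_k (q)_{n-k})`. -/
noncomputable def qbinom : ℕ → ℕ → Polynomial ℤ
  | _, 0 => 1
  | 0, _ + 1 => 0
  | n + 1, k + 1 => qbinom n k + X ^ (k + 1) * qbinom n (k + 1)

/-- Gaussian multinomial coefficient `(a+b+c; a,b,c)_q = (q)_{a+b+c}/((q)_a(q)_b(q)_c)`. -/
noncomputable def qmult (a b c : ℕ) : Polynomial ℤ :=
  qbinom (a + b + c) a * qbinom (b + c) b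

noncomputable def qpoch : ℕ → Polynomial ℤ
  | 0 => 1
  | n + 1 => qpoch n * (X ^ (n + 1) - 1)

lemma qpoch_succ (n : ℕ) : qpoch (n + 1) = qpoch n * (X ^ (n + 1) - 1) := rfl

lemma qpoch_peel (m n : ℕ) (h : m = n + 1) :
    qpoch m = qpoch n * (X ^ (n + 1) - 1) := by subst h; rfl

lemma xpow_sub_one_ne (k : ℕ) : (X ^ (k + 1) - 1 : Polynomial ℤ) ≠ 0 := by
  intro h
  have := congrArg (eval 0) h
  simp at this

lemma qpoch_ne_zero : ∀ n, qpoch n ≠ 0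
  | 0 => one_ne_zero
  | n + 1 => mul_ne_zero (qpoch_ne_zero n) (xpow_sub_one_ne n)

lemma qbinom_succ (n k : ℕ) :
    qbinom (n + 1) (k + 1) = qbinom n k + X ^ (k + 1) * qbinom n (k + 1) := rfl

lemma qbinom_zero (n : ℕ) : qbinom n 0 = 1 := by cases n <;> rfl

lemma qbinom_eq_zero : ∀ {n k : ℕ}, n < k → qbinom n k = 0 := by
  intro n
  induction n with
  | zero => intro k hk
            match k, hk with
            | k + 1, _ => rfl
  | succ n ih =>
      intro k hk
      match k, hk with
      | k + 1, hk =>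
        rw [qbinom_succ, ih (by omega), ih (by omega), mul_zero, add_zero]

lemma qbinom_self : ∀ n, qbinom n n = 1
  | 0 => rfl
  | n + 1 => by
      rw [qbinom_succ, qbinom_self n, qbinom_eq_zero (Nat.lt_succ_self n),
        mul_zero, add_zero]

lemma qbinom_mul_qpoch : ∀ n a : ℕ, a ≤ n →
    qbinom n a * (qpoch a * qpoch (n - a)) = qpoch n := by
  intro n
  induction n with
  | zero =>
      intro a ha
      interval_cases a
      simp [qbinom_zero, qpoch]
  | succ n ih =>
      intro a ha
      match a with
      | 0 => simp [qbinom_zero, qpoch]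
      | a + 1 =>
        rcases Nat.lt_or_ge a n with hlt | hge
        · obtain ⟨m, rfl⟩ : ∃ m, n = a + 1 + m := ⟨n - (a + 1), by omega⟩
          have h1 := ih a (by omega)
          rw [show a + 1 + m - a = m + 1 from by omega] at h1
          have h2 := ih (a + 1) (by omega)
          rw [show a + 1 + m - (a + 1) = m from by omega] at h2
          rw [show a + 1 + m + 1 - (a + 1) = m + 1 from by omega, qbinom_succ,
            qpoch_succ m, qpoch_succ a, qpoch_peel (a + 1 + m + 1) (a + 1 + m) rfl]
          rw [qpoch_succ m] at h1
          rw [qpoch_succ a] at h2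
          linear_combination (X ^ (a + 1) - 1 : Polynomial ℤ) * h1
            + (X : Polynomial ℤ) ^ (a + 1) * (X ^ (m + 1) - 1) * h2
        · have : a = n := by omega
          subst this
          rw [show a + 1 - (a + 1) = 0 from by omega, qbinom_self]
          show 1 * (qpoch (a + 1) * 1) = qpoch (a + 1)
          ring

lemma qmult_mul (a b c : ℕ) :
    qmult a b c * (qpoch a * qpoch b * qpoch c) = qpoch (a + b + c) := by
  have h1 := qbinom_mul_qpoch (a + b + c) a (by omega)
  rw [show a + b + c - a = b + c from by omega] at h1
  have h2 := qbinom_mul_qpoch (b + c) b (by omega)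
  rw [show b + c - b = c from by omega] at h2
  unfold qmult
  linear_combination qbinom (a + b + c) a * qpoch a * h2 + h1

lemma mid (a b c : ℕ) (h : 1 ≤ a + b + c) :
    qmult a b c
      = (if a = 0 then 0 else qmult (a - 1) b c)
        + X ^ (a + c) * (if b = 0 then 0 else qmult a (b - 1) c)
        + (if c = 0 then 0 else qmult a b (c - 1))
        + (if a = 0 ∨ c = 0 then 0 else
            (X ^ (a + b + c - 1) - 1) * qmult (a - 1) b (c - 1)) := by
  have hPP : qpoch a * qpoch b * qpoch c ≠ 0 :=
    mul_ne_zero (mul_ne_zero (qpoch_ne_zero a) (qpoch_ne_zero b)) (qpoch_ne_zero c)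
  apply mul_right_cancel₀ hPP
  rcases a with _ | a <;> rcases b with _ | b <;> rcases c with _ | c
  · omega
  · -- (0,0,c+1)
    simp only [Nat.succ_ne_zero, eq_self_iff_true, if_true, if_false, ite_true,
      ite_false, or_false, false_or, true_or, or_true, Nat.add_sub_cancel]
    have h0 := qmult_mul 0 0 (c + 1)
    have h1 := qmult_mul 0 0 c
    rw [show 0 + 0 + (c + 1) = c + 1 from by omega] at h0
    rw [show 0 + 0 + c = c from by omega] at h1
    rw [qpoch_succ c] at h0 ⊢
    linear_combination h0 - (X ^ (c + 1) - 1 : Polynomial ℤ) * h1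
  · -- (0,b+1,0)
    simp only [Nat.succ_ne_zero, eq_self_iff_true, if_true, if_false, ite_true,
      ite_false, or_false, false_or, true_or, or_true, Nat.add_sub_cancel]
    have h0 := qmult_mul 0 (b + 1) 0
    have h1 := qmult_mul 0 b 0
    rw [show 0 + (b + 1) + 0 = b + 1 from by omega] at h0
    rw [show 0 + b + 0 = b from by omega] at h1
    rw [qpoch_succ b] at h0 ⊢
    linear_combination h0 - (X ^ (b + 1) - 1 : Polynomial ℤ) * h1
  · -- (0,b+1,c+1)
    simp only [Nat.succ_ne_zero, eq_self_iff_true, if_true, if_false, ite_true,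
      ite_false, or_false, false_or, true_or, or_true, Nat.add_sub_cancel]
    have h0 := qmult_mul 0 (b + 1) (c + 1)
    have h1 := qmult_mul 0 b (c + 1)
    have h2 := qmult_mul 0 (b + 1) c
    rw [show 0 + (b + 1) + (c + 1) = (b + c + 1) + 1 from by omega,
      qpoch_peel (b + c + 1 + 1) (b + c + 1) rfl, qpoch_succ (b + c)] at h0
    rw [show 0 + b + (c + 1) = (b + c) + 1 from by omega, qpoch_succ (b + c)] at h1
    rw [show 0 + (b + 1) + c = (b + c) + 1 from by omega, qpoch_succ (b + c)] at h2
    rw [qpoch_succ b] at h0 h2 ⊢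
    rw [qpoch_succ c] at h0 h1 ⊢
    linear_combination h0 - (X : Polynomial ℤ) ^ (c + 1) * (X ^ (b + 1) - 1) * h1
      - (X ^ (c + 1) - 1 : Polynomial ℤ) * h2
  · -- (a+1,0,0)
    simp only [Nat.succ_ne_zero, eq_self_iff_true, if_true, if_false, ite_true,
      ite_false, or_false, false_or, true_or, or_true, Nat.add_sub_cancel]
    have h0 := qmult_mul (a + 1) 0 0
    have h1 := qmult_mul a 0 0
    rw [show a + 1 + 0 + 0 = a + 1 from by omega] at h0
    rw [show a + 0 + 0 = a from by omega] at h1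
    rw [qpoch_succ a] at h0 ⊢
    linear_combination h0 - (X ^ (a + 1) - 1 : Polynomial ℤ) * h1
  · -- (a+1,0,c+1)
    simp only [Nat.succ_ne_zero, eq_self_iff_true, if_true, if_false, ite_true,
      ite_false, or_false, false_or, true_or, or_true, Nat.add_sub_cancel]
    rw [show a + 1 + 0 + (c + 1) - 1 = a + c + 1 from by omega]
    have h0 := qmult_mul (a + 1) 0 (c + 1)
    have h1 := qmult_mul a 0 (c + 1)
    have h2 := qmult_mul (a + 1) 0 c
    have h3 := qmult_mul a 0 c
    rw [show a + 1 + 0 + (c + 1) = (a + c + 1) + 1 from by omega,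
      qpoch_peel (a + c + 1 + 1) (a + c + 1) rfl, qpoch_succ (a + c)] at h0
    rw [show a + 0 + (c + 1) = (a + c) + 1 from by omega, qpoch_succ (a + c)] at h1
    rw [show a + 1 + 0 + c = (a + c) + 1 from by omega, qpoch_succ (a + c)] at h2
    rw [show a + 0 + c = a + c from by omega] at h3
    rw [qpoch_succ a] at h0 h2 ⊢
    rw [qpoch_succ c] at h0 h1 ⊢
    linear_combination h0 - (X ^ (a + 1) - 1 : Polynomial ℤ) * h1
      - (X ^ (c + 1) - 1 : Polynomial ℤ) * h2
      - (X ^ (a + c + 1) - 1 : Polynomial ℤ) * (X ^ (a + 1) - 1) * (X ^ (c + 1) - 1) * h3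
  · -- (a+1,b+1,0)
    simp only [Nat.succ_ne_zero, eq_self_iff_true, if_true, if_false, ite_true,
      ite_false, or_false, false_or, true_or, or_true, Nat.add_sub_cancel]
    have h0 := qmult_mul (a + 1) (b + 1) 0
    have h1 := qmult_mul a (b + 1) 0
    have h2 := qmult_mul (a + 1) b 0
    rw [show a + 1 + (b + 1) + 0 = (a + b + 1) + 1 from by omega,
      qpoch_peel (a + b + 1 + 1) (a + b + 1) rfl, qpoch_succ (a + b)] at h0
    rw [show a + (b + 1) + 0 = (a + b) + 1 from by omega, qpoch_succ (a + b)] at h1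
    rw [show a + 1 + b + 0 = (a + b) + 1 from by omega, qpoch_succ (a + b)] at h2
    rw [qpoch_succ a] at h0 h2 ⊢
    rw [qpoch_succ b] at h0 h1 ⊢
    linear_combination h0 - (X ^ (a + 1) - 1 : Polynomial ℤ) * h1
      - (X : Polynomial ℤ) ^ (a + 1) * (X ^ (b + 1) - 1) * h2
  · -- (a+1,b+1,c+1)
    simp only [Nat.succ_ne_zero, eq_self_iff_true, if_true, if_false, ite_true,
      ite_false, or_false, false_or, true_or, or_true, Nat.add_sub_cancel]
    rw [show a + 1 + (b + 1) + (c + 1) - 1 = a + b + c + 2 from by omega]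
    have h0 := qmult_mul (a + 1) (b + 1) (c + 1)
    have h1 := qmult_mul a (b + 1) (c + 1)
    have h2 := qmult_mul (a + 1) b (c + 1)
    have h3 := qmult_mul (a + 1) (b + 1) c
    have h4 := qmult_mul a (b + 1) c
    rw [show a + 1 + (b + 1) + (c + 1) = (a + b + c + 2) + 1 from by omega,
      qpoch_peel (a + b + c + 2 + 1) (a + b + c + 2) rfl,
      qpoch_peel (a + b + c + 2) (a + b + c + 1) rfl, qpoch_succ (a + b + c)] at h0
    rw [show a + (b + 1) + (c + 1) = (a + b + c + 1) + 1 from by omega,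
      qpoch_peel (a + b + c + 1 + 1) (a + b + c + 1) rfl, qpoch_succ (a + b + c)] at h1
    rw [show a + 1 + b + (c + 1) = (a + b + c + 1) + 1 from by omega,
      qpoch_peel (a + b + c + 1 + 1) (a + b + c + 1) rfl, qpoch_succ (a + b + c)] at h2
    rw [show a + 1 + (b + 1) + c = (a + b + c + 1) + 1 from by omega,
      qpoch_peel (a + b + c + 1 + 1) (a + b + c + 1) rfl, qpoch_succ (a + b + c)] at h3
    rw [show a + (b + 1) + c = (a + b + c) + 1 from by omega, qpoch_succ (a + b + c)] at h4
    rw [qpoch_succ a] at h0 h2 h3 ⊢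
    rw [qpoch_succ b] at h0 h1 h3 h4 ⊢
    rw [qpoch_succ c] at h0 h1 h2 ⊢
    linear_combination h0 - (X ^ (a + 1) - 1 : Polynomial ℤ) * h1
      - (X : Polynomial ℤ) ^ (a + c + 2) * (X ^ (b + 1) - 1) * h2
      - (X ^ (c + 1) - 1 : Polynomial ℤ) * h3
      - (X ^ (a + b + c + 2) - 1 : Polynomial ℤ) * (X ^ (a + 1) - 1) * (X ^ (c + 1) - 1) * h4

noncomputable def gf (a b c : ℕ) : Polynomial ℤ :=
  X ^ (b ^ 2) * (qmult a b c).comp (X ^ 2)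

noncomputable def Ff (a b c : ℕ) : Polynomial ℤ :=
  gf a b c + (if a = 0 then 0 else (X ^ (2 * (a + b + c)) - 1) * gf (a - 1) b c)

lemma gid (a b c : ℕ) (h : 1 ≤ a + b + c) :
    gf a b c = (if a = 0 then 0 else gf (a - 1) b c)
      + X ^ (2 * (a + b + c) - 1) * (if b = 0 then 0 else gf a (b - 1) c)
      + (if c = 0 then 0 else Ff a b (c - 1)) := by
  have H := mid a b c h
  have H2 := congrArg (fun p : Polynomial ℤ => p.comp (X ^ 2)) H
  simp only [add_comp, mul_comp, sub_comp, pow_comp, X_comp, one_comp, zero_comp,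
    apply_ite (fun p : Polynomial ℤ => p.comp (X ^ 2))] at H2
  rcases a with _ | a <;> rcases b with _ | b <;> rcases c with _ | c <;>
    simp only [Nat.succ_ne_zero, eq_self_iff_true, if_true, if_false, ite_true,
      ite_false, or_false, false_or, true_or, or_true, Nat.add_sub_cancel,
      add_zero, zero_add, mul_zero, zero_mul, gf, Ff] at H2 ⊢
  · omega
  · rw [H2]
  · rw [show 2 * (b + 1) - 1 = 2 * b + 1 from by omega, H2]; ring
  · rw [show 2 * (b + 1 + (c + 1)) - 1 = 2 * (b + c) + 3 from by omega, H2]; ring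
  · rw [H2]
  · rw [show a + 1 + (c + 1) - 1 = a + c + 1 from by omega] at H2
    rw [H2]; ring
  · rw [show 2 * (a + 1 + (b + 1)) - 1 = 2 * (a + b) + 3 from by omega, H2]; ring
  · rw [show a + 1 + (b + 1) + (c + 1) - 1 = a + b + c + 2 from by omega] at H2
    rw [show 2 * (a + 1 + (b + 1) + (c + 1)) - 1 = 2 * (a + b + c) + 5 from by omega, H2]
    ring

/-- if `c₁, c₂ : ℤ³ → ℤ[q]` vanish on negative arguments, equal `1` at
`(0,0,0)`, and satisfy the type `A₂⁽²⁾` recurrences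
`c₁(a,b,c) = q^{2n} c₂(a-1,b,c) + q^{2n-1} c₂(a,b-1,c) + c₁(a,b,c-1)` and
`c₂(a,b,c) = c₂(a-1,b,c) + q^{2n-1} c₂(a,b-1,c) + c₁(a,b,c-1)` with `n = a+b+c ≥ 1`,
then `c₂(a,b,c) = q^{b²} · qmultinomial(a+b+c; a,b,c)` evaluated at `q²`. -/
theorem c2_closed_form
    (c₁ c₂ : ℤ → ℤ → ℤ → Polynomial ℤ)
    (hneg : ∀ a b c : ℤ, a < 0 ∨ b < 0 ∨ c < 0 → c₁ a b c = 0 ∧ c₂ a b c = 0)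
    (hinit : c₁ 0 0 0 = 1 ∧ c₂ 0 0 0 = 1)
    (hrec : ∀ a b c : ℕ, 1 ≤ a + b + c →
      c₁ a b c = X ^ (2 * (a + b + c)) * c₂ ((a : ℤ) - 1) b c
        + X ^ (2 * (a + b + c) - 1) * c₂ a ((b : ℤ) - 1) c
        + c₁ a b ((c : ℤ) - 1) ∧
      c₂ a b c = c₂ ((a : ℤ) - 1) b c
        + X ^ (2 * (a + b + c) - 1) * c₂ a ((b : ℤ) - 1) c
        + c₁ a b ((c : ℤ) - 1)) :
    ∀ a b c : ℕ, c₂ a b c = X ^ (b ^ 2) * (qmult a b c).comp (X ^ 2) := by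
  suffices H : ∀ n : ℕ, ∀ a b c : ℕ, a + b + c = n →
      c₁ a b c = Ff a b c ∧ c₂ a b c = gf a b c by
    intro a b c
    exact (H (a + b + c) a b c rfl).2
  intro n
  induction n with
  | zero =>
      intro a b c hn
      obtain ⟨rfl, rfl, rfl⟩ : a = 0 ∧ b = 0 ∧ c = 0 := by omega
      simp only [Nat.cast_zero]
      constructor
      · rw [hinit.1]; simp [Ff, gf, qmult, qbinom_zero]
      · rw [hinit.2]; simp [gf, qmult, qbinom_zero]
  | succ n ih =>
      intro a b c hn
      have hr := hrec a b c (by omega)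
      have ta : c₂ ((a : ℤ) - 1) b c = (if a = 0 then 0 else gf (a - 1) b c) := by
        rcases a with _ | a
        · rw [if_pos rfl]
          have := (hneg (-1) b c (Or.inl (by norm_num))).2
          simpa using this
        · rw [if_neg (Nat.succ_ne_zero a)]
          have e : ((a + 1 : ℕ) : ℤ) - 1 = ((a : ℕ) : ℤ) := by push_cast; ring
          rw [e]
          have := (ih a b c (by omega)).2
          simpa using this
      have tb : c₂ (a : ℤ) ((b : ℤ) - 1) c = (if b = 0 then 0 else gf a (b - 1) c) := by
        rcases b with _ | b
        · rw [if_pos rfl]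
          have := (hneg a (-1) c (Or.inr (Or.inl (by norm_num)))).2
          simpa using this
        · rw [if_neg (Nat.succ_ne_zero b)]
          have e : ((b + 1 : ℕ) : ℤ) - 1 = ((b : ℕ) : ℤ) := by push_cast; ring
          rw [e]
          have := (ih a b c (by omega)).2
          simpa using this
      have tc : c₁ (a : ℤ) b ((c : ℤ) - 1) = (if c = 0 then 0 else Ff a b (c - 1)) := by
        rcases c with _ | c
        · rw [if_pos rfl]
          have := (hneg a b (-1) (Or.inr (Or.inr (by norm_num)))).1
          simpa using this
        · rw [if_neg (Nat.succ_ne_zero c)]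
          have e : ((c + 1 : ℕ) : ℤ) - 1 = ((c : ℕ) : ℤ) := by push_cast; ring
          rw [e]
          have := (ih a b c (by omega)).1
          simpa using this
      have hg := gid a b c (by omega)
      have h2 : c₂ a b c = gf a b c := by
        rw [hr.2, ta, tb, tc]
        exact hg.symm
      refine ⟨?_, h2⟩
      have hF : Ff a b c
          = gf a b c + (if a = 0 then 0 else (X ^ (2 * (a + b + c)) - 1) * gf (a - 1) b c) :=
        rfl
      rw [hr.1, ta, tb, tc, hF]
      rcases a with _ | a
      · simp only [eq_self_iff_true, if_true, ite_true] at hg ⊢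
        linear_combination -hg
      · simp only [Nat.succ_ne_zero, if_false, ite_false] at hg ⊢
        linear_combination -hg
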